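/- Let L ≥ μ > 0 be real numbers, let E ≥ 1 be a natural number, let B ≥ 0, set λ = max{8L/μ, E} − 1 and α_t = 2/(μ(λ + t)) for integers t ≥ 1. Let Δ : ℕ → ℝ be a sequence with Δ_t ≥ 0 for all t ≥ 1 satisfying Δ_{t+1} ≤ (1 − α_t μ) Δ_t + α_t² B for all t ≥ 1. Then for all t ≥ 1, Δ_t ≤ (4B/μ² + (λ + 1) Δ_1)/(λ + t). -/

import Mathlib

/-- Specialized decay bound: with `λ = max{8L/μ, E} − 1` and
`α_t = 2/(μ(λ + t))`, the recursion `Δ_{t+1} ≤ (1 − α_t μ) Δ_t + α_t² B`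
yields `Δ_t ≤ (4B/μ² + (λ + 1)Δ_1)/(λ + t)` for all `t ≥ 1`. -/
theorem specialized_decay_bound (L μ B : ℝ) (hμ : 0 < μ) (hLμ : μ ≤ L)
    (E : ℕ) (hE : 1 ≤ E) (hB : 0 ≤ B)
    (lam : ℝ) (hlam : lam = max (8 * L / μ) (E : ℝ) - 1)
    (α : ℕ → ℝ) (hα : ∀ t : ℕ, α t = 2 / (μ * (lam + (t : ℝ))))
    (Δ : ℕ → ℝ) (hΔnonneg : ∀ t : ℕ, 1 ≤ t → 0 ≤ Δ t)
    (hrec : ∀ t : ℕ, 1 ≤ t → Δ (t + 1) ≤ (1 - α t * μ) * Δ t + (α t) ^ 2 * B) :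
    ∀ t : ℕ, 1 ≤ t → Δ t ≤ (4 * B / μ ^ 2 + (lam + 1) * Δ 1) / (lam + (t : ℝ)) := by
  set v : ℝ := 4 * B / μ ^ 2 + (lam + 1) * Δ 1 with hv
  clear_value v
  have h8 : (8 : ℝ) ≤ lam + 1 := by
    have h1 : (8 : ℝ) ≤ 8 * L / μ := by
      rw [le_div_iff₀ hμ]; nlinarith
    have := le_max_left (8 * L / μ) (E : ℝ)
    rw [hlam]; linarith
  have hBμ : 0 ≤ 4 * B / μ ^ 2 := by positivity
  have hΔ1 : 0 ≤ Δ 1 := hΔnonneg 1 le_rfl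
  have hvB : 4 * B / μ ^ 2 ≤ v := by nlinarith
  have hv0 : 0 ≤ v := le_trans hBμ hvB
  have h4B : 4 * B ≤ v * μ ^ 2 := by
    have := (div_le_iff₀ (by positivity : (0:ℝ) < μ ^ 2)).mp hvB
    linarith
  intro t ht
  induction t, ht using Nat.le_induction with
  | base =>
      rw [le_div_iff₀ (by push_cast; linarith : (0:ℝ) < lam + ((1:ℕ) : ℝ))]
      push_cast; nlinarith
  | succ n hn ih =>
      have hn1 : (1 : ℝ) ≤ (n : ℝ) := by exact_mod_cast hn
      set s : ℝ := lam + (n : ℝ) with hs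
      have hs8 : (8 : ℝ) ≤ s := by simp only [hs]; linarith
      have hs0 : (0 : ℝ) < s := by linarith
      have hαn : α n = 2 / (μ * s) := hα n
      have hstep : Δ (n + 1) ≤ (1 - 2 / s) * (v / s) + (2 / (μ * s)) ^ 2 * B := by
        have h1 := hrec n hn
        have hαμ : α n * μ = 2 / s := by
          rw [hαn]; field_simp
        have hcoef : (0 : ℝ) ≤ 1 - 2 / s := by
          have : 2 / s ≤ 2 / 8 := by
            apply div_le_div_of_nonneg_left (by norm_num) (by norm_num) hs8
          linarith
        calc Δ (n + 1) ≤ (1 - α n * μ) * Δ n + (α n) ^ 2 * B := h1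
          _ ≤ (1 - 2 / s) * (v / s) + (2 / (μ * s)) ^ 2 * B := by
              rw [hαμ, hαn]
              exact add_le_add_left (mul_le_mul_of_nonneg_left ih hcoef) _
      have hkey : (1 - 2 / s) * (v / s) + (2 / (μ * s)) ^ 2 * B ≤ v / (s + 1) := by
        have hμ0 : μ ≠ 0 := ne_of_gt hμ
        have hs0' : s ≠ 0 := ne_of_gt hs0
        have hs1 : s + 1 ≠ 0 := by linarith
        have hexp : v / (s + 1) - ((1 - 2 / s) * (v / s) + (2 / (μ * s)) ^ 2 * B)
            = ((s + 2) * (v * μ ^ 2) - (s + 1) * (4 * B)) / (μ ^ 2 * s ^ 2 * (s + 1)) := by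
          field_simp
          ring
        have hnum : 0 ≤ (s + 2) * (v * μ ^ 2) - (s + 1) * (4 * B) := by
          have h1 : (s + 1) * (4 * B) ≤ (s + 1) * (v * μ ^ 2) :=
            mul_le_mul_of_nonneg_left h4B (by linarith)
          have h2 : 0 ≤ v * μ ^ 2 := mul_nonneg hv0 (sq_nonneg μ)
          nlinarith
        have h := div_nonneg hnum (by positivity : (0:ℝ) ≤ μ ^ 2 * s ^ 2 * (s + 1))
        rw [← hexp] at h
        linarith
      push_cast
      have heq : lam + ((n : ℝ) + 1) = s + 1 := by rw [hs]; ring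
      rw [heq]
      exact le_trans hstep hkey
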